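/- With the notation of the Kraus-reduction construction: for any L ∈ B(H), the reduced dissipator satisfies R ∘ D_L ∘ J = Σ_{Ľ ∈ X(L)} D_{Ľ}, where D_C(ρ) = CρC* − ½{C*C, ρ}. In particular, the restriction of a GKLS (Lindblad) generator onto a unital *-subalgebra via the CPTP factors of the orthogonal conditional expectation is again a GKLS generator. -/

import Mathlib

/-! STATEMENT 6: the reduced dissipator satisfies R ∘ D_L ∘ J = Σ_{Ľ ∈ X(L)} D_Ľ, and the
restriction of a GKLS generator via the CPTP factors of the orthogonal conditional
expectation is again a GKLS generator. -/

open Matrix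
open scoped Kronecker BigOperators

noncomputable section

abbrev Mat (n : ℕ) : Type := Matrix (Fin n) (Fin n) ℂ

/-- Partial trace over the second tensor factor. -/
def ptrG {a b : ℕ} (M : Matrix (Fin a × Fin b) (Fin a × Fin b) ℂ) :
    Matrix (Fin a) (Fin a) ℂ :=
  Matrix.of fun i j => ∑ g : Fin b, M (i, g) (j, g)

variable {K n m : ℕ} {dF dG : Fin K → ℕ}

/-- The reduction map `R : B(H) → Ǎ`, `R(X) = ⊕ₖ tr_{G,k}(Vₖ* X Vₖ)`. -/
def Rmap (V : ∀ k : Fin K, Matrix (Fin n) (Fin (dF k) × Fin (dG k)) ℂ)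
    (W : ∀ k : Fin K, Matrix (Fin m) (Fin (dF k)) ℂ) (X : Mat n) : Mat m :=
  ∑ k : Fin K, W k * ptrG ((V k)ᴴ * X * V k) * (W k)ᴴ

/-- The injection map `J : Ǎ → B(H)`, `J(ρ̌) = ⊕ₖ ρ̌ₖ ⊗ 1_{G,k}/dim H_{G,k}`. -/
def Jmap (V : ∀ k : Fin K, Matrix (Fin n) (Fin (dF k) × Fin (dG k)) ℂ)
    (W : ∀ k : Fin K, Matrix (Fin m) (Fin (dF k)) ℂ) (ρ : Mat m) : Mat n :=
  ∑ k : Fin K, V k *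
    (((W k)ᴴ * ρ * W k) ⊗ₖ (((dG k : ℂ))⁻¹ • (1 : Matrix (Fin (dG k)) (Fin (dG k)) ℂ))) *
    (V k)ᴴ

/-- The Hilbert–Schmidt adjoint of `J`, `J*(X) = ⊕ₖ tr_{G,k}(Vₖ* X Vₖ)/dim H_{G,k}`. -/
def Jstar (V : ∀ k : Fin K, Matrix (Fin n) (Fin (dF k) × Fin (dG k)) ℂ)
    (W : ∀ k : Fin K, Matrix (Fin m) (Fin (dF k)) ℂ) (X : Mat n) : Mat m :=
  ∑ k : Fin K, ((dG k : ℂ))⁻¹ • (W k * ptrG ((V k)ᴴ * X * V k) * (W k)ᴴ)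

/-- Membership in the reduced algebra `Ǎ = ⊕ₖ B(H_{F,k})`: block-diagonal matrices. -/
def IsBlockDiag (W : ∀ k : Fin K, Matrix (Fin m) (Fin (dF k)) ℂ) (ρ : Mat m) : Prop :=
  ρ = ∑ k : Fin K, (W k * (W k)ᴴ) * ρ * (W k * (W k)ᴴ)

/-- The reduced Kraus operators `Ľ_{ℓ,e}`. -/
def redKraus (dG : Fin K → ℕ) (W : ∀ k : Fin K, Matrix (Fin m) (Fin (dF k)) ℂ)
    {d : ℕ} (LF : ∀ j k : Fin K, Fin d → Matrix (Fin (dF j)) (Fin (dF k)) ℂ)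
    (ℓ : Fin d) (e : ℤ) : Mat m :=
  ∑ j : Fin K, ∑ k : Fin K,
    if ((k : ℤ) - (j : ℤ) = e) then
      ((Real.sqrt (dG k) : ℂ))⁻¹ • (W j * LF j k ℓ * (W k)ᴴ)
    else 0

/-- The dissipator `D_L(ρ) = LρL* − ½{L*L, ρ}`. -/
def dissip {p : ℕ} (L ρ : Mat p) : Mat p :=
  L * ρ * Lᴴ - (2⁻¹ : ℂ) • ((Lᴴ * L) * ρ + ρ * (Lᴴ * L))

/-- A GKLS (Lindblad) generator with Hamiltonian `H₀` and noise operators `Ls`. -/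
def gkls {p M : ℕ} (H₀ : Mat p) (Ls : Fin M → Mat p) (ρ : Mat p) : Mat p :=
  (-Complex.I) • (H₀ * ρ - ρ * H₀) + ∑ j : Fin M, dissip (Ls j) ρ


section Helpers

variable {K n m : ℕ} {dF dG : Fin K → ℕ}

lemma ptrG_add {a b : ℕ} (M N : Matrix (Fin a × Fin b) (Fin a × Fin b) ℂ) :
    ptrG (M + N) = ptrG M + ptrG N := by
  ext i j; simp [ptrG, Finset.sum_add_distrib]

lemma ptrG_smul {a b : ℕ} (c : ℂ) (M : Matrix (Fin a × Fin b) (Fin a × Fin b) ℂ) :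
    ptrG (c • M) = c • ptrG M := by
  ext i j; simp [ptrG, Finset.mul_sum]

lemma ptrG_sub {a b : ℕ} (M N : Matrix (Fin a × Fin b) (Fin a × Fin b) ℂ) :
    ptrG (M - N) = ptrG M - ptrG N := by
  ext i j; simp [ptrG, Finset.sum_sub_distrib]

lemma ptrG_sum {a b : ℕ} {ι : Type*} (s : Finset ι)
    (f : ι → Matrix (Fin a × Fin b) (Fin a × Fin b) ℂ) :
    ptrG (∑ i ∈ s, f i) = ∑ i ∈ s, ptrG (f i) := by
  ext p q
  simp only [ptrG, Matrix.of_apply, Matrix.sum_apply]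
  rw [Finset.sum_comm]

lemma ptrG_kron {a b : ℕ} (A : Matrix (Fin a) (Fin a) ℂ) (B : Matrix (Fin b) (Fin b) ℂ) :
    ptrG (A ⊗ₖ B) = B.trace • A := by
  ext i j
  simp only [ptrG, Matrix.of_apply, Matrix.kroneckerMap_apply, Matrix.smul_apply,
    Matrix.trace, Matrix.diag, smul_eq_mul, Finset.sum_mul]
  exact Finset.sum_congr rfl fun g _ => mul_comm _ _

lemma ptrG_conjT {a b : ℕ} (M : Matrix (Fin a × Fin b) (Fin a × Fin b) ℂ) :
    (ptrG M)ᴴ = ptrG Mᴴ := by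
  ext i j
  simp [ptrG, Matrix.conjTranspose_apply]

lemma kron_conjT {a b c e : ℕ} (A : Matrix (Fin a) (Fin b) ℂ) (B : Matrix (Fin c) (Fin e) ℂ) :
    (A ⊗ₖ B)ᴴ = Aᴴ ⊗ₖ Bᴴ := by
  ext p q
  simp [Matrix.conjTranspose_apply, mul_comm]

lemma ptrG_mul_kron_one {a b : ℕ} (Y : Matrix (Fin a × Fin b) (Fin a × Fin b) ℂ)
    (A : Matrix (Fin a) (Fin a) ℂ) :
    ptrG (Y * (A ⊗ₖ (1 : Matrix (Fin b) (Fin b) ℂ))) = ptrG Y * A := by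
  ext i j
  simp only [ptrG, Matrix.of_apply, Matrix.mul_apply, Matrix.kroneckerMap_apply,
    Matrix.one_apply, mul_ite, mul_one, mul_zero, Fintype.sum_prod_type]
  rw [Finset.sum_comm]
  refine Finset.sum_congr rfl fun f _ => ?_
  simp [Finset.sum_ite_eq, Finset.sum_mul]

lemma ptrG_kron_one_mul {a b : ℕ} (A : Matrix (Fin a) (Fin a) ℂ)
    (Y : Matrix (Fin a × Fin b) (Fin a × Fin b) ℂ) :
    ptrG ((A ⊗ₖ (1 : Matrix (Fin b) (Fin b) ℂ)) * Y) = A * ptrG Y := by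
  ext i j
  simp only [ptrG, Matrix.of_apply, Matrix.mul_apply, Matrix.kroneckerMap_apply,
    Matrix.one_apply, ite_mul, one_mul, zero_mul, Fintype.sum_prod_type]
  rw [Finset.sum_comm]
  refine Finset.sum_congr rfl fun f _ => ?_
  simp [Finset.mul_sum]

lemma Rmap_add (V : ∀ k : Fin K, Matrix (Fin n) (Fin (dF k) × Fin (dG k)) ℂ)
    (W : ∀ k : Fin K, Matrix (Fin m) (Fin (dF k)) ℂ) (X Y : Mat n) :
    Rmap V W (X + Y) = Rmap V W X + Rmap V W Y := by
  simp [Rmap, Matrix.mul_add, Matrix.add_mul, ptrG_add, Finset.sum_add_distrib]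

lemma Rmap_sub (V : ∀ k : Fin K, Matrix (Fin n) (Fin (dF k) × Fin (dG k)) ℂ)
    (W : ∀ k : Fin K, Matrix (Fin m) (Fin (dF k)) ℂ) (X Y : Mat n) :
    Rmap V W (X - Y) = Rmap V W X - Rmap V W Y := by
  simp [Rmap, Matrix.mul_sub, Matrix.sub_mul, ptrG_sub, Finset.sum_sub_distrib]

lemma Rmap_smul (V : ∀ k : Fin K, Matrix (Fin n) (Fin (dF k) × Fin (dG k)) ℂ)
    (W : ∀ k : Fin K, Matrix (Fin m) (Fin (dF k)) ℂ) (c : ℂ) (X : Mat n) :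
    Rmap V W (c • X) = c • Rmap V W X := by
  simp [Rmap, Matrix.mul_smul, Matrix.smul_mul, ptrG_smul, Finset.smul_sum]

lemma Rmap_sum (V : ∀ k : Fin K, Matrix (Fin n) (Fin (dF k) × Fin (dG k)) ℂ)
    (W : ∀ k : Fin K, Matrix (Fin m) (Fin (dF k)) ℂ) {ι : Type*} (s : Finset ι)
    (f : ι → Mat n) :
    Rmap V W (∑ i ∈ s, f i) = ∑ i ∈ s, Rmap V W (f i) := by
  simp only [Rmap, Matrix.mul_sum, Matrix.sum_mul, ptrG_sum]
  rw [Finset.sum_comm]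

lemma Jstar_conjT (V : ∀ k : Fin K, Matrix (Fin n) (Fin (dF k) × Fin (dG k)) ℂ)
    (W : ∀ k : Fin K, Matrix (Fin m) (Fin (dF k)) ℂ) (X : Mat n) :
    (Jstar V W X)ᴴ = Jstar V W Xᴴ := by
  simp [Jstar, Matrix.conjTranspose_sum, Matrix.conjTranspose_smul,
    Matrix.conjTranspose_mul, ptrG_conjT, Matrix.mul_assoc, star_inv₀]

lemma bd1 (W : ∀ k : Fin K, Matrix (Fin m) (Fin (dF k)) ℂ)
    (hWortho : ∀ k, (W k)ᴴ * W k = 1)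
    (hWdisj : ∀ j k, j ≠ k → (W j)ᴴ * W k = 0)
    {ρ : Mat m} (h : IsBlockDiag W ρ) (k : Fin K) :
    (W k)ᴴ * ρ = ((W k)ᴴ * ρ * W k) * (W k)ᴴ := by
  conv_lhs => rw [h]
  rw [Matrix.mul_sum, Finset.sum_eq_single k]
  · simp only [← Matrix.mul_assoc, hWortho k, Matrix.one_mul]
  · intro j _ hj
    simp only [← Matrix.mul_assoc, hWdisj k j (Ne.symm hj), Matrix.zero_mul]
  · simp

lemma bd2 (W : ∀ k : Fin K, Matrix (Fin m) (Fin (dF k)) ℂ)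
    (hWortho : ∀ k, (W k)ᴴ * W k = 1)
    (hWdisj : ∀ j k, j ≠ k → (W j)ᴴ * W k = 0)
    {ρ : Mat m} (h : IsBlockDiag W ρ) (k : Fin K) :
    ρ * W k = W k * ((W k)ᴴ * ρ * W k) := by
  conv_lhs => rw [h]
  rw [Matrix.sum_mul, Finset.sum_eq_single k]
  · simp only [Matrix.mul_assoc, hWortho k, Matrix.mul_one]
  · intro j _ hj
    simp only [Matrix.mul_assoc, hWdisj j k hj, Matrix.mul_zero]
  · simp

lemma bd_pair (W : ∀ k : Fin K, Matrix (Fin m) (Fin (dF k)) ℂ)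
    (hWortho : ∀ k, (W k)ᴴ * W k = 1)
    (hWdisj : ∀ j k, j ≠ k → (W j)ᴴ * W k = 0)
    {ρ : Mat m} (h : IsBlockDiag W ρ) {j k : Fin K} (hjk : j ≠ k) :
    (W j)ᴴ * ρ * W k = 0 := by
  rw [bd1 W hWortho hWdisj h j, Matrix.mul_assoc, hWdisj j k hjk, Matrix.mul_zero]


lemma J_mul_V (V : ∀ k : Fin K, Matrix (Fin n) (Fin (dF k) × Fin (dG k)) ℂ)
    (W : ∀ k : Fin K, Matrix (Fin m) (Fin (dF k)) ℂ)
    (hVortho : ∀ k, (V k)ᴴ * V k = 1)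
    (hVdisj : ∀ j k, j ≠ k → (V j)ᴴ * V k = 0) (ρ : Mat m) (k : Fin K) :
    Jmap V W ρ * V k = V k *
      (((W k)ᴴ * ρ * W k) ⊗ₖ (((dG k : ℂ))⁻¹ • (1 : Matrix (Fin (dG k)) (Fin (dG k)) ℂ))) := by
  rw [Jmap, Matrix.sum_mul, Finset.sum_eq_single k]
  · rw [Matrix.mul_assoc, hVortho k, Matrix.mul_one]
  · intro j _ hj
    rw [Matrix.mul_assoc, hVdisj j k hj, Matrix.mul_zero]
  · simp

lemma V_mul_J (V : ∀ k : Fin K, Matrix (Fin n) (Fin (dF k) × Fin (dG k)) ℂ)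
    (W : ∀ k : Fin K, Matrix (Fin m) (Fin (dF k)) ℂ)
    (hVortho : ∀ k, (V k)ᴴ * V k = 1)
    (hVdisj : ∀ j k, j ≠ k → (V j)ᴴ * V k = 0) (ρ : Mat m) (k : Fin K) :
    (V k)ᴴ * Jmap V W ρ =
      (((W k)ᴴ * ρ * W k) ⊗ₖ (((dG k : ℂ))⁻¹ • (1 : Matrix (Fin (dG k)) (Fin (dG k)) ℂ))) *
        (V k)ᴴ := by
  rw [Jmap, Matrix.mul_sum, Finset.sum_eq_single k]
  · simp only [← Matrix.mul_assoc, hVortho k, Matrix.one_mul]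
  · intro j _ hj
    simp only [← Matrix.mul_assoc, hVdisj k j (Ne.symm hj), Matrix.zero_mul]
  · simp

lemma Rmap_X_J (V : ∀ k : Fin K, Matrix (Fin n) (Fin (dF k) × Fin (dG k)) ℂ)
    (W : ∀ k : Fin K, Matrix (Fin m) (Fin (dF k)) ℂ)
    (hVortho : ∀ k, (V k)ᴴ * V k = 1)
    (hVdisj : ∀ j k, j ≠ k → (V j)ᴴ * V k = 0)
    (hWortho : ∀ k, (W k)ᴴ * W k = 1)
    (hWdisj : ∀ j k, j ≠ k → (W j)ᴴ * W k = 0)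
    (X : Mat n) {ρ : Mat m} (h : IsBlockDiag W ρ) :
    Rmap V W (X * Jmap V W ρ) = Jstar V W X * ρ := by
  rw [Rmap, Jstar, Matrix.sum_mul]
  refine Finset.sum_congr rfl fun k _ => ?_
  have h1 : (V k)ᴴ * (X * Jmap V W ρ) * V k
      = ((V k)ᴴ * X * V k) * (((W k)ᴴ * ρ * W k) ⊗ₖ
          (((dG k : ℂ))⁻¹ • (1 : Matrix (Fin (dG k)) (Fin (dG k)) ℂ))) := by
    simp only [Matrix.mul_assoc, J_mul_V V W hVortho hVdisj ρ k]
  rw [h1, Matrix.kronecker_smul, Matrix.mul_smul, ptrG_smul, ptrG_mul_kron_one,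
    Matrix.mul_smul, Matrix.smul_mul, Matrix.smul_mul]
  congr 1
  conv_rhs => rw [Matrix.mul_assoc, Matrix.mul_assoc, bd1 W hWortho hWdisj h k]
  simp only [Matrix.mul_assoc]

lemma Rmap_J_X (V : ∀ k : Fin K, Matrix (Fin n) (Fin (dF k) × Fin (dG k)) ℂ)
    (W : ∀ k : Fin K, Matrix (Fin m) (Fin (dF k)) ℂ)
    (hVortho : ∀ k, (V k)ᴴ * V k = 1)
    (hVdisj : ∀ j k, j ≠ k → (V j)ᴴ * V k = 0)
    (hWortho : ∀ k, (W k)ᴴ * W k = 1)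
    (hWdisj : ∀ j k, j ≠ k → (W j)ᴴ * W k = 0)
    (X : Mat n) {ρ : Mat m} (h : IsBlockDiag W ρ) :
    Rmap V W (Jmap V W ρ * X) = ρ * Jstar V W X := by
  rw [Rmap, Jstar, Matrix.mul_sum]
  refine Finset.sum_congr rfl fun k _ => ?_
  have h1 : (V k)ᴴ * (Jmap V W ρ * X) * V k
      = (((W k)ᴴ * ρ * W k) ⊗ₖ
          (((dG k : ℂ))⁻¹ • (1 : Matrix (Fin (dG k)) (Fin (dG k)) ℂ))) *
        ((V k)ᴴ * X * V k) := by
    rw [← Matrix.mul_assoc, V_mul_J V W hVortho hVdisj ρ k]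
    simp only [Matrix.mul_assoc]
  rw [h1, Matrix.kronecker_smul, Matrix.smul_mul, ptrG_smul, ptrG_kron_one_mul,
    Matrix.mul_smul, Matrix.smul_mul, Matrix.mul_smul]
  congr 1
  conv_rhs => rw [← Matrix.mul_assoc, ← Matrix.mul_assoc, bd2 W hWortho hWdisj h k]
  simp only [Matrix.mul_assoc]


/-- The isometry `F → F ⊗ G` mapping `f ↦ f ⊗ g`. -/
def emb {a b : ℕ} (g : Fin b) : Matrix (Fin a × Fin b) (Fin a) ℂ :=
  Matrix.of fun p f => if p = (f, g) then 1 else 0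

lemma ptrG_eq_sum_emb {a b : ℕ} (M : Matrix (Fin a × Fin b) (Fin a × Fin b) ℂ) :
    ptrG M = ∑ g : Fin b, (emb (a := a) g)ᴴ * M * emb (a := a) g := by
  ext i j
  simp only [ptrG, Matrix.of_apply, Matrix.sum_apply, Matrix.mul_apply,
    Matrix.conjTranspose_apply, emb, apply_ite (star : ℂ → ℂ), star_one, star_zero,
    ite_mul, one_mul, zero_mul, mul_ite, mul_one, mul_zero]
  refine Finset.sum_congr rfl fun g _ => ?_
  simp [Finset.sum_ite_eq, Finset.sum_ite_eq']

lemma kron_one_eq {a b : ℕ} (A : Matrix (Fin a) (Fin a) ℂ) :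
    A ⊗ₖ (1 : Matrix (Fin b) (Fin b) ℂ) = ∑ g : Fin b, emb (a := a) g * A * (emb (a := a) g)ᴴ := by
  ext p q
  simp only [Matrix.kroneckerMap_apply, Matrix.one_apply, Matrix.sum_apply, Matrix.mul_apply,
    Matrix.conjTranspose_apply, emb, Matrix.of_apply, apply_ite (star : ℂ → ℂ), star_one,
    star_zero, ite_mul, one_mul, zero_mul, mul_ite, mul_one, mul_zero]
  rcases p with ⟨f, g⟩; rcases q with ⟨f', g'⟩
  by_cases hg : g = g' <;>
    simp [Prod.ext_iff, ite_and, Finset.sum_ite_eq, hg, Ne.symm, eq_comm]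

lemma sum_emb {a b : ℕ} :
    ∑ g : Fin b, emb (a := a) g * (emb (a := a) g)ᴴ = (1 : Matrix (Fin a × Fin b) (Fin a × Fin b) ℂ) := by
  have := kron_one_eq (b := b) (1 : Matrix (Fin a) (Fin a) ℂ)
  simp only [Matrix.mul_one] at this
  rw [← this]
  ext p q
  by_cases h1 : p.1 = q.1 <;> by_cases h2 : p.2 = q.2 <;>
    simp [Matrix.one_apply, Prod.ext_iff, h1, h2]

/-- Kraus operators of the reduction map `R`. -/
def Akr (V : ∀ k : Fin K, Matrix (Fin n) (Fin (dF k) × Fin (dG k)) ℂ)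
    (W : ∀ k : Fin K, Matrix (Fin m) (Fin (dF k)) ℂ)
    (x : (k : Fin K) × Fin (dG k)) : Matrix (Fin m) (Fin n) ℂ :=
  W x.1 * (emb (a := dF x.1) x.2)ᴴ * (V x.1)ᴴ

/-- Kraus operators of the injection map `J`. -/
def Bkr (V : ∀ k : Fin K, Matrix (Fin n) (Fin (dF k) × Fin (dG k)) ℂ)
    (W : ∀ k : Fin K, Matrix (Fin m) (Fin (dF k)) ℂ)
    (x : (k : Fin K) × Fin (dG k)) : Matrix (Fin n) (Fin m) ℂ :=
  ((Real.sqrt (dG x.1) : ℂ))⁻¹ • (V x.1 * emb (a := dF x.1) x.2 * (W x.1)ᴴ)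

lemma sqrt_inv_sq {k : Fin K} (hk : 0 < dG k) :
    ((Real.sqrt (dG k) : ℂ))⁻¹ * ((Real.sqrt (dG k) : ℂ))⁻¹ = ((dG k : ℂ))⁻¹ := by
  rw [← mul_inv, ← Complex.ofReal_mul, Real.mul_self_sqrt (by positivity)]
  norm_num

lemma star_sqrt_inv {k : Fin K} :
    star (((Real.sqrt (dG k) : ℂ))⁻¹) = ((Real.sqrt (dG k) : ℂ))⁻¹ := by
  simp [star_inv₀, Complex.star_def, Complex.conj_ofReal]

lemma Rmap_kraus (V : ∀ k : Fin K, Matrix (Fin n) (Fin (dF k) × Fin (dG k)) ℂ)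
    (W : ∀ k : Fin K, Matrix (Fin m) (Fin (dF k)) ℂ) (X : Mat n) :
    Rmap V W X = ∑ x : (k : Fin K) × Fin (dG k), Akr V W x * X * (Akr V W x)ᴴ := by
  rw [Rmap]
  conv_rhs => rw [← Finset.univ_sigma_univ, Finset.sum_sigma]
  refine Finset.sum_congr rfl fun k _ => ?_
  rw [ptrG_eq_sum_emb, Matrix.mul_sum, Matrix.sum_mul]
  refine Finset.sum_congr rfl fun g _ => ?_
  simp only [Akr, Matrix.conjTranspose_mul, Matrix.conjTranspose_conjTranspose,
    Matrix.mul_assoc]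

lemma Jmap_kraus (V : ∀ k : Fin K, Matrix (Fin n) (Fin (dF k) × Fin (dG k)) ℂ)
    (W : ∀ k : Fin K, Matrix (Fin m) (Fin (dF k)) ℂ) (hdG : ∀ k, 0 < dG k) (ρ : Mat m) :
    Jmap V W ρ = ∑ x : (k : Fin K) × Fin (dG k), Bkr V W x * ρ * (Bkr V W x)ᴴ := by
  rw [Jmap]
  conv_rhs => rw [← Finset.univ_sigma_univ, Finset.sum_sigma]
  refine Finset.sum_congr rfl fun k _ => ?_
  rw [Matrix.kronecker_smul, kron_one_eq, Finset.smul_sum, Matrix.mul_sum, Matrix.sum_mul]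
  refine Finset.sum_congr rfl fun g _ => ?_
  simp only [Bkr, Matrix.conjTranspose_smul, Matrix.conjTranspose_mul,
    Matrix.conjTranspose_conjTranspose, star_sqrt_inv, Matrix.mul_smul, Matrix.smul_mul,
    smul_smul, sqrt_inv_sq (hdG k)]
  simp only [Matrix.mul_assoc]

lemma Jstar_kraus (V : ∀ k : Fin K, Matrix (Fin n) (Fin (dF k) × Fin (dG k)) ℂ)
    (W : ∀ k : Fin K, Matrix (Fin m) (Fin (dF k)) ℂ) (hdG : ∀ k, 0 < dG k) (X : Mat n) :
    Jstar V W X = ∑ x : (k : Fin K) × Fin (dG k), (Bkr V W x)ᴴ * X * Bkr V W x := by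
  rw [Jstar]
  conv_rhs => rw [← Finset.univ_sigma_univ, Finset.sum_sigma]
  refine Finset.sum_congr rfl fun k _ => ?_
  rw [ptrG_eq_sum_emb, Matrix.mul_sum, Matrix.sum_mul, Finset.smul_sum]
  refine Finset.sum_congr rfl fun g _ => ?_
  simp only [Bkr, Matrix.conjTranspose_smul, Matrix.conjTranspose_mul,
    Matrix.conjTranspose_conjTranspose, star_sqrt_inv, Matrix.mul_smul, Matrix.smul_mul,
    smul_smul, sqrt_inv_sq (hdG k)]
  simp only [Matrix.mul_assoc]

lemma Akr_complete (V : ∀ k : Fin K, Matrix (Fin n) (Fin (dF k) × Fin (dG k)) ℂ)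
    (W : ∀ k : Fin K, Matrix (Fin m) (Fin (dF k)) ℂ)
    (hVcomplete : ∑ k : Fin K, V k * (V k)ᴴ = 1)
    (hWortho : ∀ k, (W k)ᴴ * W k = 1) :
    ∑ x : (k : Fin K) × Fin (dG k), (Akr V W x)ᴴ * Akr V W x = (1 : Mat n) := by
  rw [← Finset.univ_sigma_univ, Finset.sum_sigma]
  have hk : ∀ k : Fin K, ∑ g : Fin (dG k), (Akr V W ⟨k, g⟩)ᴴ * Akr V W ⟨k, g⟩
      = V k * (V k)ᴴ := by
    intro k
    have h1 : ∀ g : Fin (dG k), (Akr V W ⟨k, g⟩)ᴴ * Akr V W ⟨k, g⟩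
        = V k * (emb (a := dF k) g * (emb (a := dF k) g)ᴴ) * (V k)ᴴ := by
      intro g
      simp only [Akr, Matrix.conjTranspose_mul, Matrix.conjTranspose_conjTranspose,
        Matrix.mul_assoc]
      rw [← Matrix.mul_assoc ((W k)ᴴ) (W k), hWortho k, Matrix.one_mul]
    rw [Finset.sum_congr rfl fun g _ => h1 g, ← Matrix.sum_mul, ← Matrix.mul_sum,
      sum_emb, Matrix.mul_one]
  rw [Finset.sum_congr rfl fun k _ => hk k, hVcomplete]

lemma kraus_prod (V : ∀ k : Fin K, Matrix (Fin n) (Fin (dF k) × Fin (dG k)) ℂ)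
    (W : ∀ k : Fin K, Matrix (Fin m) (Fin (dF k)) ℂ) (hdG : ∀ k, 0 < dG k)
    (C : Mat n) (ρ : Mat m) :
    Rmap V W (C * Jmap V W ρ * Cᴴ) =
      ∑ x : ((k : Fin K) × Fin (dG k)) × ((k : Fin K) × Fin (dG k)),
        (Akr V W x.1 * C * Bkr V W x.2) * ρ * (Akr V W x.1 * C * Bkr V W x.2)ᴴ := by
  rw [Rmap_kraus, Jmap_kraus V W hdG]
  conv_rhs => rw [Fintype.sum_prod_type]
  simp only [Matrix.mul_sum, Matrix.sum_mul]
  refine Finset.sum_congr rfl fun a _ => Finset.sum_congr rfl fun b _ => ?_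
  simp only [Matrix.conjTranspose_mul, Matrix.mul_assoc]

lemma kraus_sq (V : ∀ k : Fin K, Matrix (Fin n) (Fin (dF k) × Fin (dG k)) ℂ)
    (W : ∀ k : Fin K, Matrix (Fin m) (Fin (dF k)) ℂ)
    (hVcomplete : ∑ k : Fin K, V k * (V k)ᴴ = 1)
    (hWortho : ∀ k, (W k)ᴴ * W k = 1) (hdG : ∀ k, 0 < dG k) (C : Mat n) :
    ∑ x : ((k : Fin K) × Fin (dG k)) × ((k : Fin K) × Fin (dG k)),
      (Akr V W x.1 * C * Bkr V W x.2)ᴴ * (Akr V W x.1 * C * Bkr V W x.2)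
      = Jstar V W (Cᴴ * C) := by
  rw [Jstar_kraus V W hdG]
  conv_lhs => rw [Fintype.sum_prod_type]
  rw [Finset.sum_comm]
  refine Finset.sum_congr rfl fun b _ => ?_
  calc ∑ a : (k : Fin K) × Fin (dG k), (Akr V W a * C * Bkr V W b)ᴴ * (Akr V W a * C * Bkr V W b)
      = (Bkr V W b)ᴴ * Cᴴ * (∑ a : (k : Fin K) × Fin (dG k), (Akr V W a)ᴴ * Akr V W a) *
          C * Bkr V W b := by
        simp only [Matrix.mul_sum, Matrix.sum_mul]
        refine Finset.sum_congr rfl fun a _ => ?_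
        simp only [Matrix.conjTranspose_mul, Matrix.mul_assoc]
    _ = (Bkr V W b)ᴴ * (Cᴴ * C) * Bkr V W b := by
        rw [Akr_complete V W hVcomplete hWortho, Matrix.mul_one]
        simp only [Matrix.mul_assoc]

lemma dissip_reduce (V : ∀ k : Fin K, Matrix (Fin n) (Fin (dF k) × Fin (dG k)) ℂ)
    (W : ∀ k : Fin K, Matrix (Fin m) (Fin (dF k)) ℂ)
    (hVortho : ∀ k, (V k)ᴴ * V k = 1)
    (hVdisj : ∀ j k, j ≠ k → (V j)ᴴ * V k = 0)
    (hWortho : ∀ k, (W k)ᴴ * W k = 1)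
    (hWdisj : ∀ j k, j ≠ k → (W j)ᴴ * W k = 0)
    {ι : Type*} (s : Finset ι) (C : Mat n) (Ks : ι → Mat m) {ρ : Mat m}
    (h : IsBlockDiag W ρ)
    (h1 : Rmap V W (C * Jmap V W ρ * Cᴴ) = ∑ i ∈ s, Ks i * ρ * (Ks i)ᴴ)
    (h2 : ∑ i ∈ s, (Ks i)ᴴ * Ks i = Jstar V W (Cᴴ * C)) :
    Rmap V W (dissip C (Jmap V W ρ)) = ∑ i ∈ s, dissip (Ks i) ρ := by
  unfold dissip
  rw [Rmap_sub, Rmap_smul, Rmap_add, h1,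
    Rmap_X_J V W hVortho hVdisj hWortho hWdisj (Cᴴ * C) h,
    Rmap_J_X V W hVortho hVdisj hWortho hWdisj (Cᴴ * C) h, ← h2,
    Matrix.sum_mul, Matrix.mul_sum, ← Finset.sum_add_distrib, Finset.smul_sum,
    ← Finset.sum_sub_distrib]


lemma hmem_Icc {j k : Fin K} (hK : 0 < K) :
    ((k : ℤ) - (j : ℤ)) ∈ Finset.Icc (-(K : ℤ) + 1) ((K : ℤ) - 1) := by
  have hj : (j : ℕ) < K := j.isLt
  have hk : (k : ℕ) < K := k.isLt
  rw [Finset.mem_Icc]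
  omega

lemma fin_eq_of_int {j j' : Fin K} (h : (j : ℤ) = (j' : ℤ)) : j = j' := by
  have : (j : ℕ) = (j' : ℕ) := by omega
  exact Fin.ext this

lemma redKraus_eq {d : ℕ} (W : ∀ k : Fin K, Matrix (Fin m) (Fin (dF k)) ℂ)
    (LF : ∀ j k : Fin K, Fin d → Matrix (Fin (dF j)) (Fin (dF k)) ℂ)
    (ℓ : Fin d) (e : ℤ) :
    redKraus dG W LF ℓ e = ∑ j : Fin K, ∑ k : Fin K,
      (if ((k : ℤ) - (j : ℤ) = e) then ((Real.sqrt (dG k) : ℂ))⁻¹ else 0) •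
        (W j * LF j k ℓ * (W k)ᴴ) := by
  unfold redKraus
  refine Finset.sum_congr rfl fun j _ => Finset.sum_congr rfl fun k _ => ?_
  split <;> simp

lemma Wdisj' {a : ℕ} (W : ∀ k : Fin K, Matrix (Fin m) (Fin (dF k)) ℂ)
    (hWdisj : ∀ j k, j ≠ k → (W j)ᴴ * W k = 0)
    {j j' : Fin K} (hjj' : j ≠ j') (X : Matrix (Fin (dF j')) (Fin a) ℂ) :
    (W j)ᴴ * (W j' * X) = 0 := by
  rw [← Matrix.mul_assoc, hWdisj j j' hjj', Matrix.zero_mul]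

lemma bd_pair' {a : ℕ} (W : ∀ k : Fin K, Matrix (Fin m) (Fin (dF k)) ℂ)
    (hWortho : ∀ k, (W k)ᴴ * W k = 1)
    (hWdisj : ∀ j k, j ≠ k → (W j)ᴴ * W k = 0)
    {ρ : Mat m} (h : IsBlockDiag W ρ) {k k' : Fin K} (hkk' : k ≠ k')
    (X : Matrix (Fin (dF k')) (Fin a) ℂ) :
    (W k)ᴴ * (ρ * (W k' * X)) = 0 := by
  rw [← Matrix.mul_assoc, ← Matrix.mul_assoc, bd_pair W hWortho hWdisj h hkk',
    Matrix.zero_mul]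


lemma VLV (V : ∀ k : Fin K, Matrix (Fin n) (Fin (dF k) × Fin (dG k)) ℂ)
    (hVortho : ∀ k, (V k)ᴴ * V k = 1)
    (hVdisj : ∀ j k, j ≠ k → (V j)ᴴ * V k = 0)
    {d : ℕ} (L : Mat n)
    (LF : ∀ j k : Fin K, Fin d → Matrix (Fin (dF j)) (Fin (dF k)) ℂ)
    (GG : ∀ j k : Fin K, Fin d → Matrix (Fin (dG j)) (Fin (dG k)) ℂ)
    (hL : L = ∑ j : Fin K, ∑ k : Fin K, ∑ ℓ : Fin d,
      V j * ((LF j k ℓ) ⊗ₖ (GG j k ℓ)) * (V k)ᴴ) (j k : Fin K) :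
    (V j)ᴴ * L * V k = ∑ ℓ : Fin d, (LF j k ℓ) ⊗ₖ (GG j k ℓ) := by
  rw [hL]
  simp only [Matrix.mul_sum, Matrix.sum_mul]
  rw [Finset.sum_eq_single j]
  · rw [Finset.sum_eq_single k]
    · refine Finset.sum_congr rfl fun ℓ _ => ?_
      simp only [Matrix.mul_assoc]
      rw [hVortho k, Matrix.mul_one, ← Matrix.mul_assoc, hVortho j, Matrix.one_mul]
    · intro k' _ hk'
      apply Finset.sum_eq_zero; intro ℓ _
      simp only [Matrix.mul_assoc, hVdisj k' k hk', Matrix.mul_zero]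
    · simp
  · intro j' _ hj'
    apply Finset.sum_eq_zero; intro k' _
    apply Finset.sum_eq_zero; intro ℓ _
    simp only [← Matrix.mul_assoc, hVdisj j j' (Ne.symm hj'), Matrix.zero_mul]
  · simp

lemma ptr_core2 (V : ∀ k : Fin K, Matrix (Fin n) (Fin (dF k) × Fin (dG k)) ℂ)
    (hVortho : ∀ k, (V k)ᴴ * V k = 1)
    (hVdisj : ∀ j k, j ≠ k → (V j)ᴴ * V k = 0)
    {d : ℕ} (L : Mat n)
    (LF : ∀ j k : Fin K, Fin d → Matrix (Fin (dF j)) (Fin (dF k)) ℂ)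
    (GG : ∀ j k : Fin K, Fin d → Matrix (Fin (dG j)) (Fin (dG k)) ℂ)
    (hL : L = ∑ j : Fin K, ∑ k : Fin K, ∑ ℓ : Fin d,
      V j * ((LF j k ℓ) ⊗ₖ (GG j k ℓ)) * (V k)ᴴ)
    (hGorth : ∀ (j k : Fin K) (ℓ f : Fin d), ℓ ≠ f → ((GG j k ℓ)ᴴ * GG j k f).trace = 0)
    (hGnorm : ∀ (j k : Fin K) (ℓ : Fin d), GG j k ℓ ≠ 0 → ((GG j k ℓ)ᴴ * GG j k ℓ).trace = 1)
    (hpad : ∀ (j k : Fin K) (ℓ : Fin d), GG j k ℓ = 0 → LF j k ℓ = 0) (j k : Fin K) :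
    ptrG (((V j)ᴴ * L * V k)ᴴ * ((V j)ᴴ * L * V k))
      = ∑ ℓ : Fin d, (LF j k ℓ)ᴴ * LF j k ℓ := by
  rw [VLV V hVortho hVdisj L LF GG hL j k, Matrix.conjTranspose_sum]
  simp only [Matrix.sum_mul, Matrix.mul_sum, ptrG_sum]
  refine Finset.sum_congr rfl fun f _ => ?_
  rw [Finset.sum_eq_single f]
  · rw [kron_conjT, ← Matrix.mul_kronecker_mul, ptrG_kron]
    by_cases hz : GG j k f = 0
    · rw [hpad j k f hz]; simp
    · rw [hGnorm j k f hz, one_smul]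
  · intro g _ hg
    rw [kron_conjT, ← Matrix.mul_kronecker_mul, ptrG_kron, hGorth j k g f hg, zero_smul]
  · simp


lemma Wortho' {a : ℕ} (W : ∀ k : Fin K, Matrix (Fin m) (Fin (dF k)) ℂ)
    (hWortho : ∀ k, (W k)ᴴ * W k = 1)
    (j : Fin K) (X : Matrix (Fin (dF j)) (Fin a) ℂ) :
    (W j)ᴴ * (W j * X) = X := by
  rw [← Matrix.mul_assoc, hWortho j, Matrix.one_mul]


lemma sum_rot3 {M : Type*} [AddCommMonoid M] {α β γ : Type*}
    (s : Finset α) (t : Finset β) (u : Finset γ) (f : α → β → γ → M) :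
    ∑ a ∈ s, ∑ b ∈ t, ∑ c ∈ u, f a b c = ∑ c ∈ u, ∑ b ∈ t, ∑ a ∈ s, f a b c := by
  rw [Finset.sum_comm]
  rw [show (∑ b ∈ t, ∑ a ∈ s, ∑ c ∈ u, f a b c)
      = ∑ b ∈ t, ∑ c ∈ u, ∑ a ∈ s, f a b c from
    Finset.sum_congr rfl fun b _ => Finset.sum_comm]
  rw [Finset.sum_comm]

lemma sum_rot4 {M : Type*} [AddCommMonoid M] {α β γ δ : Type*}
    (s : Finset α) (t : Finset β) (u : Finset γ) (v : Finset δ)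
    (f : α → β → γ → δ → M) :
    ∑ a ∈ s, ∑ b ∈ t, ∑ c ∈ u, ∑ e ∈ v, f a b c e
      = ∑ b ∈ t, ∑ c ∈ u, ∑ e ∈ v, ∑ a ∈ s, f a b c e := by
  rw [Finset.sum_comm]
  refine Finset.sum_congr rfl fun b _ => ?_
  rw [Finset.sum_comm]
  refine Finset.sum_congr rfl fun c _ => ?_
  rw [Finset.sum_comm]


lemma sum_rot3' {M : Type*} [AddCommMonoid M] {α β γ : Type*}
    (s : Finset α) (t : Finset β) (u : Finset γ) (f : α → β → γ → M) :
    ∑ a ∈ s, ∑ b ∈ t, ∑ c ∈ u, f a b c = ∑ b ∈ t, ∑ c ∈ u, ∑ a ∈ s, f a b c := by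
  rw [Finset.sum_comm]
  exact Finset.sum_congr rfl fun b _ => Finset.sum_comm

lemma ptr_core1 (V : ∀ k : Fin K, Matrix (Fin n) (Fin (dF k) × Fin (dG k)) ℂ)
    (hVortho : ∀ k, (V k)ᴴ * V k = 1)
    (hVdisj : ∀ j k, j ≠ k → (V j)ᴴ * V k = 0)
    {d : ℕ} (L : Mat n)
    (LF : ∀ j k : Fin K, Fin d → Matrix (Fin (dF j)) (Fin (dF k)) ℂ)
    (GG : ∀ j k : Fin K, Fin d → Matrix (Fin (dG j)) (Fin (dG k)) ℂ)
    (hL : L = ∑ j : Fin K, ∑ k : Fin K, ∑ ℓ : Fin d,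
      V j * ((LF j k ℓ) ⊗ₖ (GG j k ℓ)) * (V k)ᴴ)
    (hGorth : ∀ (j k : Fin K) (ℓ f : Fin d), ℓ ≠ f → ((GG j k ℓ)ᴴ * GG j k f).trace = 0)
    (hGnorm : ∀ (j k : Fin K) (ℓ : Fin d), GG j k ℓ ≠ 0 → ((GG j k ℓ)ᴴ * GG j k ℓ).trace = 1)
    (hpad : ∀ (j k : Fin K) (ℓ : Fin d), GG j k ℓ = 0 → LF j k ℓ = 0) (j k : Fin K)
    (rc : Matrix (Fin (dF k)) (Fin (dF k)) ℂ) :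
    ptrG (((V j)ᴴ * L * V k) *
        (rc ⊗ₖ (((dG k : ℂ))⁻¹ • (1 : Matrix (Fin (dG k)) (Fin (dG k)) ℂ))) *
        ((V j)ᴴ * L * V k)ᴴ)
      = ∑ ℓ : Fin d, ((dG k : ℂ))⁻¹ • (LF j k ℓ * rc * (LF j k ℓ)ᴴ) := by
  rw [VLV V hVortho hVdisj L LF GG hL j k, Matrix.conjTranspose_sum]
  simp only [kron_conjT, Matrix.sum_mul, Matrix.mul_sum, ptrG_sum]
  refine Finset.sum_congr rfl fun f _ => ?_
  rw [Finset.sum_eq_single f]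
  · rw [Matrix.kronecker_smul, Matrix.mul_smul, Matrix.smul_mul, ← Matrix.mul_kronecker_mul,
      ← Matrix.mul_kronecker_mul, ptrG_smul, ptrG_kron, Matrix.mul_one,
      Matrix.trace_mul_comm]
    by_cases hz : GG j k f = 0
    · rw [hpad j k f hz]; simp
    · rw [hGnorm j k f hz, one_smul]
  · intro g _ hg
    rw [Matrix.kronecker_smul, Matrix.mul_smul, Matrix.smul_mul, ← Matrix.mul_kronecker_mul,
      ← Matrix.mul_kronecker_mul, ptrG_smul, ptrG_kron, Matrix.mul_one,
      Matrix.trace_mul_comm, hGorth j k f g (Ne.symm hg), zero_smul, smul_zero]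
  · simp


lemma redKraus_prod (V : ∀ k : Fin K, Matrix (Fin n) (Fin (dF k) × Fin (dG k)) ℂ)
    (W : ∀ k : Fin K, Matrix (Fin m) (Fin (dF k)) ℂ)
    (hVortho : ∀ k, (V k)ᴴ * V k = 1)
    (hVdisj : ∀ j k, j ≠ k → (V j)ᴴ * V k = 0)
    (hWortho : ∀ k, (W k)ᴴ * W k = 1)
    (hWdisj : ∀ j k, j ≠ k → (W j)ᴴ * W k = 0)
    (hdG : ∀ k, 0 < dG k) {d : ℕ} (L : Mat n)
    (LF : ∀ j k : Fin K, Fin d → Matrix (Fin (dF j)) (Fin (dF k)) ℂ)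
    (GG : ∀ j k : Fin K, Fin d → Matrix (Fin (dG j)) (Fin (dG k)) ℂ)
    (hL : L = ∑ j : Fin K, ∑ k : Fin K, ∑ ℓ : Fin d,
      V j * ((LF j k ℓ) ⊗ₖ (GG j k ℓ)) * (V k)ᴴ)
    (hGorth : ∀ (j k : Fin K) (ℓ f : Fin d), ℓ ≠ f → ((GG j k ℓ)ᴴ * GG j k f).trace = 0)
    (hGnorm : ∀ (j k : Fin K) (ℓ : Fin d), GG j k ℓ ≠ 0 → ((GG j k ℓ)ᴴ * GG j k ℓ).trace = 1)
    (hpad : ∀ (j k : Fin K) (ℓ : Fin d), GG j k ℓ = 0 → LF j k ℓ = 0)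
    {ρ : Mat m} (h : IsBlockDiag W ρ) :
    Rmap V W (L * Jmap V W ρ * Lᴴ)
      = ∑ p ∈ (Finset.Icc (-(K : ℤ) + 1) ((K : ℤ) - 1)) ×ˢ (Finset.univ : Finset (Fin d)),
          redKraus dG W LF p.2 p.1 * ρ * (redKraus dG W LF p.2 p.1)ᴴ := by
  have hRL : Rmap V W (L * Jmap V W ρ * Lᴴ)
      = ∑ j : Fin K, ∑ k : Fin K, ∑ ℓ : Fin d, ((dG k : ℂ))⁻¹ •
          (W j * (LF j k ℓ * ((W k)ᴴ * ρ * W k) * (LF j k ℓ)ᴴ) * (W j)ᴴ) := by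
    rw [Rmap, Jmap]
    refine Finset.sum_congr rfl fun j _ => ?_
    have e1 : (V j)ᴴ * (L * (∑ k : Fin K, V k *
          (((W k)ᴴ * ρ * W k) ⊗ₖ (((dG k : ℂ))⁻¹ •
            (1 : Matrix (Fin (dG k)) (Fin (dG k)) ℂ))) * (V k)ᴴ) * Lᴴ) * V j
        = ∑ k : Fin K, ((V j)ᴴ * L * V k) *
            (((W k)ᴴ * ρ * W k) ⊗ₖ (((dG k : ℂ))⁻¹ •
              (1 : Matrix (Fin (dG k)) (Fin (dG k)) ℂ))) * ((V j)ᴴ * L * V k)ᴴ := by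
      simp only [Matrix.mul_sum, Matrix.sum_mul, Matrix.conjTranspose_mul,
        Matrix.conjTranspose_conjTranspose, Matrix.mul_assoc]
    rw [e1, ptrG_sum,
      Finset.sum_congr rfl fun k _ =>
        ptr_core1 V hVortho hVdisj L LF GG hL hGorth hGnorm hpad j k ((W k)ᴴ * ρ * W k)]
    simp only [Matrix.mul_sum, Matrix.sum_mul, Matrix.mul_smul, Matrix.smul_mul]
  have hterm : ∀ (ℓ : Fin d) (e : ℤ),
      redKraus dG W LF ℓ e * ρ * (redKraus dG W LF ℓ e)ᴴ
      = ∑ j : Fin K, ∑ k : Fin K, (if ((k : ℤ) - (j : ℤ) = e) then ((dG k : ℂ))⁻¹ else 0) •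
          (W j * (LF j k ℓ * ((W k)ᴴ * ρ * W k) * (LF j k ℓ)ᴴ) * (W j)ᴴ) := by
    intro ℓ e
    rw [redKraus_eq]
    simp only [Matrix.conjTranspose_sum, Matrix.conjTranspose_smul, Matrix.conjTranspose_mul,
      Matrix.conjTranspose_conjTranspose, Matrix.sum_mul, Matrix.mul_sum, Matrix.smul_mul,
      Matrix.mul_smul, smul_smul, Matrix.mul_assoc]
    refine Finset.sum_congr rfl fun j _ => Finset.sum_congr rfl fun k _ => ?_
    by_cases hP : ((k : ℤ) - (j : ℤ) = e)
    · rw [Finset.sum_eq_single j]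
      · rw [Finset.sum_eq_single k]
        · simp only [hP, if_true, star_sqrt_inv, Matrix.mul_assoc, smul_smul,
            sqrt_inv_sq (hdG k)]
        · intro k₀ _ hk₀
          rw [bd_pair' W hWortho hWdisj h hk₀]
          simp
        · simp
      · intro j₀ _ hj₀
        apply Finset.sum_eq_zero; intro k₀ _
        by_cases hk : k₀ = k
        · subst hk
          have h1 : ¬(((k₀ : ℤ) - (j₀ : ℤ)) = e) := fun hc => hj₀ (fin_eq_of_int (by omega))
          simp only [h1, if_false, star_zero, zero_smul, smul_zero]
        · rw [bd_pair' W hWortho hWdisj h hk]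
          simp
      · simp
    · simp only [hP, if_false, star_zero, zero_smul, smul_zero]
  rw [Finset.sum_product, hRL]
  refine Eq.symm ?_
  calc ∑ e ∈ Finset.Icc (-(K : ℤ) + 1) ((K : ℤ) - 1), ∑ ℓ : Fin d,
        redKraus dG W LF ℓ e * ρ * (redKraus dG W LF ℓ e)ᴴ
      = ∑ e ∈ Finset.Icc (-(K : ℤ) + 1) ((K : ℤ) - 1), ∑ ℓ : Fin d, ∑ j : Fin K, ∑ k : Fin K,
          (if ((k : ℤ) - (j : ℤ) = e) then ((dG k : ℂ))⁻¹ else 0) •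
            (W j * (LF j k ℓ * ((W k)ᴴ * ρ * W k) * (LF j k ℓ)ᴴ) * (W j)ᴴ) := by
        exact Finset.sum_congr rfl fun e _ => Finset.sum_congr rfl fun ℓ _ => hterm ℓ e
    _ = ∑ ℓ : Fin d, ∑ j : Fin K, ∑ k : Fin K,
          ∑ e ∈ Finset.Icc (-(K : ℤ) + 1) ((K : ℤ) - 1),
          (if ((k : ℤ) - (j : ℤ) = e) then ((dG k : ℂ))⁻¹ else 0) •
            (W j * (LF j k ℓ * ((W k)ᴴ * ρ * W k) * (LF j k ℓ)ᴴ) * (W j)ᴴ) := by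
        exact sum_rot4 _ _ _ _ _
    _ = ∑ ℓ : Fin d, ∑ j : Fin K, ∑ k : Fin K,
          ((dG k : ℂ))⁻¹ • (W j * (LF j k ℓ * ((W k)ᴴ * ρ * W k) * (LF j k ℓ)ᴴ) * (W j)ᴴ) := by
        refine Finset.sum_congr rfl fun ℓ _ => Finset.sum_congr rfl fun j _ =>
          Finset.sum_congr rfl fun k _ => ?_
        rw [← Finset.sum_smul, Finset.sum_ite_eq, if_pos (hmem_Icc j.pos)]
    _ = ∑ j : Fin K, ∑ k : Fin K, ∑ ℓ : Fin d,
          ((dG k : ℂ))⁻¹ • (W j * (LF j k ℓ * ((W k)ᴴ * ρ * W k) * (LF j k ℓ)ᴴ) * (W j)ᴴ) := by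
        exact sum_rot3' _ _ _ _

lemma redKraus_sq (V : ∀ k : Fin K, Matrix (Fin n) (Fin (dF k) × Fin (dG k)) ℂ)
    (W : ∀ k : Fin K, Matrix (Fin m) (Fin (dF k)) ℂ)
    (hVortho : ∀ k, (V k)ᴴ * V k = 1)
    (hVdisj : ∀ j k, j ≠ k → (V j)ᴴ * V k = 0)
    (hVcomplete : ∑ k : Fin K, V k * (V k)ᴴ = 1)
    (hWortho : ∀ k, (W k)ᴴ * W k = 1)
    (hWdisj : ∀ j k, j ≠ k → (W j)ᴴ * W k = 0)
    (hdG : ∀ k, 0 < dG k) {d : ℕ} (L : Mat n)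
    (LF : ∀ j k : Fin K, Fin d → Matrix (Fin (dF j)) (Fin (dF k)) ℂ)
    (GG : ∀ j k : Fin K, Fin d → Matrix (Fin (dG j)) (Fin (dG k)) ℂ)
    (hL : L = ∑ j : Fin K, ∑ k : Fin K, ∑ ℓ : Fin d,
      V j * ((LF j k ℓ) ⊗ₖ (GG j k ℓ)) * (V k)ᴴ)
    (hGorth : ∀ (j k : Fin K) (ℓ f : Fin d), ℓ ≠ f → ((GG j k ℓ)ᴴ * GG j k f).trace = 0)
    (hGnorm : ∀ (j k : Fin K) (ℓ : Fin d), GG j k ℓ ≠ 0 → ((GG j k ℓ)ᴴ * GG j k ℓ).trace = 1)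
    (hpad : ∀ (j k : Fin K) (ℓ : Fin d), GG j k ℓ = 0 → LF j k ℓ = 0) :
    ∑ p ∈ (Finset.Icc (-(K : ℤ) + 1) ((K : ℤ) - 1)) ×ˢ (Finset.univ : Finset (Fin d)),
        (redKraus dG W LF p.2 p.1)ᴴ * redKraus dG W LF p.2 p.1
      = Jstar V W (Lᴴ * L) := by
  have hJs : Jstar V W (Lᴴ * L) = ∑ k : Fin K, ∑ j : Fin K, ∑ ℓ : Fin d,
      ((dG k : ℂ))⁻¹ • (W k * ((LF j k ℓ)ᴴ * LF j k ℓ) * (W k)ᴴ) := by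
    rw [Jstar]
    refine Finset.sum_congr rfl fun k _ => ?_
    have hins : Lᴴ * L = Lᴴ * (∑ j : Fin K, V j * (V j)ᴴ) * L := by
      rw [hVcomplete, Matrix.mul_one]
    have e0 : (V k)ᴴ * (Lᴴ * L) * V k
        = ∑ j : Fin K, ((V j)ᴴ * L * V k)ᴴ * ((V j)ᴴ * L * V k) := by
      rw [hins]
      simp only [Matrix.mul_sum, Matrix.sum_mul, Matrix.conjTranspose_mul,
        Matrix.conjTranspose_conjTranspose, Matrix.mul_assoc]
    rw [e0, ptrG_sum,
      Finset.sum_congr rfl fun j _ =>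
        ptr_core2 V hVortho hVdisj L LF GG hL hGorth hGnorm hpad j k]
    simp only [Matrix.mul_sum, Matrix.sum_mul, Finset.smul_sum]
  have hterm : ∀ (ℓ : Fin d) (e : ℤ), (redKraus dG W LF ℓ e)ᴴ * redKraus dG W LF ℓ e
      = ∑ j : Fin K, ∑ k : Fin K, (if ((k : ℤ) - (j : ℤ) = e) then ((dG k : ℂ))⁻¹ else 0) •
          (W k * ((LF j k ℓ)ᴴ * LF j k ℓ) * (W k)ᴴ) := by
    intro ℓ e
    rw [redKraus_eq]
    simp only [Matrix.conjTranspose_sum, Matrix.conjTranspose_smul, Matrix.conjTranspose_mul,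
      Matrix.conjTranspose_conjTranspose, Matrix.sum_mul, Matrix.mul_sum, Matrix.smul_mul,
      Matrix.mul_smul, smul_smul, Matrix.mul_assoc]
    refine Finset.sum_congr rfl fun j _ => Finset.sum_congr rfl fun k _ => ?_
    by_cases hP : ((k : ℤ) - (j : ℤ) = e)
    · rw [Finset.sum_eq_single j]
      · rw [Finset.sum_eq_single k]
        · simp only [hP, if_true, star_sqrt_inv, Wortho' W hWortho j, Matrix.mul_assoc,
            smul_smul, sqrt_inv_sq (hdG k)]
        · intro k₀ _ hk₀
          have h1 : ¬(((k₀ : ℤ) - (j : ℤ)) = e) := fun hc => hk₀ (fin_eq_of_int (by omega))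
          simp only [h1, if_false, star_zero, zero_smul, smul_zero]
        · simp
      · intro j₀ _ hj₀
        apply Finset.sum_eq_zero; intro k₀ _
        rw [Wdisj' W hWdisj hj₀]
        simp
      · simp
    · simp only [hP, if_false, star_zero, zero_smul, smul_zero]
  rw [Finset.sum_product, hJs]
  calc ∑ e ∈ Finset.Icc (-(K : ℤ) + 1) ((K : ℤ) - 1), ∑ ℓ : Fin d,
        (redKraus dG W LF ℓ e)ᴴ * redKraus dG W LF ℓ e
      = ∑ e ∈ Finset.Icc (-(K : ℤ) + 1) ((K : ℤ) - 1), ∑ ℓ : Fin d, ∑ j : Fin K, ∑ k : Fin K,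
          (if ((k : ℤ) - (j : ℤ) = e) then ((dG k : ℂ))⁻¹ else 0) •
            (W k * ((LF j k ℓ)ᴴ * LF j k ℓ) * (W k)ᴴ) := by
        exact Finset.sum_congr rfl fun e _ => Finset.sum_congr rfl fun ℓ _ => hterm ℓ e
    _ = ∑ ℓ : Fin d, ∑ j : Fin K, ∑ k : Fin K,
          ∑ e ∈ Finset.Icc (-(K : ℤ) + 1) ((K : ℤ) - 1),
          (if ((k : ℤ) - (j : ℤ) = e) then ((dG k : ℂ))⁻¹ else 0) •
            (W k * ((LF j k ℓ)ᴴ * LF j k ℓ) * (W k)ᴴ) := by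
        exact sum_rot4 _ _ _ _ _
    _ = ∑ ℓ : Fin d, ∑ j : Fin K, ∑ k : Fin K,
          ((dG k : ℂ))⁻¹ • (W k * ((LF j k ℓ)ᴴ * LF j k ℓ) * (W k)ᴴ) := by
        refine Finset.sum_congr rfl fun ℓ _ => Finset.sum_congr rfl fun j _ =>
          Finset.sum_congr rfl fun k _ => ?_
        rw [← Finset.sum_smul, Finset.sum_ite_eq, if_pos (hmem_Icc j.pos)]
    _ = ∑ k : Fin K, ∑ j : Fin K, ∑ ℓ : Fin d,
          ((dG k : ℂ))⁻¹ • (W k * ((LF j k ℓ)ᴴ * LF j k ℓ) * (W k)ᴴ) := by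
        exact sum_rot3 _ _ _ _


end Helpers

theorem reduced_dissipator_and_GKLS
    (V : ∀ k : Fin K, Matrix (Fin n) (Fin (dF k) × Fin (dG k)) ℂ)
    (W : ∀ k : Fin K, Matrix (Fin m) (Fin (dF k)) ℂ)
    (hVortho : ∀ k, (V k)ᴴ * V k = 1)
    (hVdisj : ∀ j k, j ≠ k → (V j)ᴴ * V k = 0)
    (hVcomplete : ∑ k : Fin K, V k * (V k)ᴴ = 1)
    (hWortho : ∀ k, (W k)ᴴ * W k = 1)
    (hWdisj : ∀ j k, j ≠ k → (W j)ᴴ * W k = 0)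
    (hWcomplete : ∑ k : Fin K, W k * (W k)ᴴ = 1)
    (hdG : ∀ k, 0 < dG k)
    {d : ℕ} (L : Mat n)
    (LF : ∀ j k : Fin K, Fin d → Matrix (Fin (dF j)) (Fin (dF k)) ℂ)
    (GG : ∀ j k : Fin K, Fin d → Matrix (Fin (dG j)) (Fin (dG k)) ℂ)
    (hL : L = ∑ j : Fin K, ∑ k : Fin K, ∑ ℓ : Fin d,
      V j * ((LF j k ℓ) ⊗ₖ (GG j k ℓ)) * (V k)ᴴ)
    (hGorth : ∀ (j k : Fin K) (ℓ f : Fin d), ℓ ≠ f → ((GG j k ℓ)ᴴ * GG j k f).trace = 0)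
    (hGnorm : ∀ (j k : Fin K) (ℓ : Fin d), GG j k ℓ ≠ 0 → ((GG j k ℓ)ᴴ * GG j k ℓ).trace = 1)
    (hpad : ∀ (j k : Fin K) (ℓ : Fin d), GG j k ℓ = 0 → LF j k ℓ = 0) :
    -- the reduced dissipator is a sum of dissipators of the reduced Kraus operators
    (∀ ρ : Mat m, IsBlockDiag W ρ →
      Rmap V W (dissip L (Jmap V W ρ)) =
        ∑ e ∈ Finset.Icc (-(K : ℤ) + 1) ((K : ℤ) - 1), ∑ ℓ : Fin d,
          dissip (redKraus dG W LF ℓ e) ρ) ∧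
    -- in particular, the reduction of any GKLS generator is again a GKLS generator
    (∀ (M : ℕ) (H₀ : Mat n) (Ls : Fin M → Mat n), H₀ᴴ = H₀ →
      ∃ (M' : ℕ) (Hr : Mat m) (Ks : Fin M' → Mat m), Hrᴴ = Hr ∧
        ∀ ρ : Mat m, IsBlockDiag W ρ →
          Rmap V W (gkls H₀ Ls (Jmap V W ρ)) = gkls Hr Ks ρ) := by
  constructor
  · intro ρ h
    have h1 := redKraus_prod V W hVortho hVdisj hWortho hWdisj hdG L LF GG hL hGorth
      hGnorm hpad h
    have h2 := redKraus_sq V W hVortho hVdisj hVcomplete hWortho hWdisj hdG L LF GG hL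
      hGorth hGnorm hpad
    have key := dissip_reduce V W hVortho hVdisj hWortho hWdisj
      ((Finset.Icc (-(K : ℤ) + 1) ((K : ℤ) - 1)) ×ˢ (Finset.univ : Finset (Fin d))) L
      (fun p : ℤ × Fin d => redKraus dG W LF p.2 p.1) h h1 h2
    rw [key, Finset.sum_product]
  · intro M H₀ Ls hH
    classical
    refine ⟨Fintype.card (Fin M × (((k : Fin K) × Fin (dG k)) × ((k : Fin K) × Fin (dG k)))),
      Jstar V W H₀,
      fun i => (fun p : Fin M × (((k : Fin K) × Fin (dG k)) × ((k : Fin K) × Fin (dG k))) =>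
        Akr V W p.2.1 * Ls p.1 * Bkr V W p.2.2)
        ((Fintype.equivFin _).symm i), ?_, ?_⟩
    · rw [Jstar_conjT, hH]
    · intro ρ h
      rw [gkls, gkls, Rmap_add, Rmap_smul, Rmap_sub,
        Rmap_X_J V W hVortho hVdisj hWortho hWdisj H₀ h,
        Rmap_J_X V W hVortho hVdisj hWortho hWdisj H₀ h,
        Rmap_sum V W Finset.univ (fun j => dissip (Ls j) (Jmap V W ρ))]
      congr 1
      have hj : ∀ j : Fin M, Rmap V W (dissip (Ls j) (Jmap V W ρ))
          = ∑ q : ((k : Fin K) × Fin (dG k)) × ((k : Fin K) × Fin (dG k)),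
              dissip (Akr V W q.1 * Ls j * Bkr V W q.2) ρ := by
        intro j
        exact dissip_reduce V W hVortho hVdisj hWortho hWdisj Finset.univ (Ls j)
          (fun q : ((k : Fin K) × Fin (dG k)) × ((k : Fin K) × Fin (dG k)) =>
            Akr V W q.1 * Ls j * Bkr V W q.2) h
          (kraus_prod V W hdG (Ls j) ρ) (kraus_sq V W hVcomplete hWortho hdG (Ls j))
      calc ∑ j : Fin M, Rmap V W (dissip (Ls j) (Jmap V W ρ))
          = ∑ p : Fin M × (((k : Fin K) × Fin (dG k)) × ((k : Fin K) × Fin (dG k))),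
              dissip (Akr V W p.2.1 * Ls p.1 * Bkr V W p.2.2) ρ := by
            rw [Fintype.sum_prod_type]
            exact Finset.sum_congr rfl fun j _ => hj j
        _ = _ := (Fintype.sum_equiv (Fintype.equivFin _).symm _ _ fun i => rfl).symm

end
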